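/- Let T, S be perfect subtrees of 2^{<ω} and let D ⊆ 2^{<ω} × 2^{<ω} be open dense in the product of two copies of Cohen forcing. Then the set D_{(T,S)} of pairs (t,s) ∈ 𝔸_{𝕊,T} × 𝔸_{𝕊,S} such that for every pair (p,q) of terminal nodes of t and s respectively, (Θ_T(p), Θ_S(q)) ∈ D, is dense in 𝔸_{𝕊,T} × 𝔸_{𝕊,S}. -/

import Mathlib

def IsTree (T : Set (List Bool)) : Prop :=
  ∀ ⦃l m : List Bool⦄, l <+: m → m ∈ T → l ∈ T

def SplitsAt (T : Set (List Bool)) (l : List Bool) : Prop :=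
  l ++ [false] ∈ T ∧ l ++ [true] ∈ T

def PerfectTree (T : Set (List Bool)) : Prop :=
  T.Nonempty ∧ IsTree T ∧ ∀ l ∈ T, ∃ m ∈ T, l <+: m ∧ SplitsAt T m

def splitNodes (T : Set (List Bool)) : Set (List Bool) :=
  {l | l ∈ T ∧ SplitsAt T l}

def FullBin (n : ℕ) : Set (List Bool) := {l | l.length ≤ n}

def IsoTo (t u : Set (List Bool)) : Prop :=
  ∃ e : t ≃ u, ∀ a b : t, (a : List Bool) <+: (b : List Bool) ↔
    ((e a : List Bool) <+: (e b : List Bool))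

def SacksAux (S : Set (List Bool)) : Set (Set (List Bool)) :=
  {t | t ⊆ S ∧ t.Finite ∧ ∃ n, IsoTo t (FullBin n)}

noncomputable def height (t : Set (List Bool)) : ℕ :=
  sSup (List.length '' t)

def EndExt (t s : Set (List Bool)) : Prop :=
  s ⊆ t ∧ ∀ l ∈ t, l.length ≤ height s → l ∈ s

def Term (t : Set (List Bool)) : Set (List Bool) :=
  {p | p ∈ t ∧ ∀ q ∈ t, p <+: q → q = p}

/-! ### Auxiliary lemmas -/

lemma prefix_dropLast' {l m : List Bool} (h : l <+: m) (hl : l.length < m.length) :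
    l <+: m.dropLast := by
  rw [List.prefix_iff_eq_take] at h ⊢
  rw [List.dropLast_eq_take, List.take_take, min_eq_left (by omega)]
  exact h

lemma concat_getLastD (m : List Bool) (hm : m ≠ []) :
    m.dropLast ++ [m.getLastD false] = m := by
  induction m using List.reverseRecOn with
  | nil => simp at hm
  | append_singleton l b ih => simp

lemma not_prefix_extend {a b a' b' : List Bool} (hab : ¬ a <+: b) (hba : ¬ b <+: a)
    (ha : a <+: a') (hb : b <+: b') : ¬ a' <+: b' := by
  intro h
  rcases List.prefix_or_prefix_of_prefix (ha.trans h) hb with h' | h' <;> tauto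

lemma oneD (D : Set (List Bool × List Bool))
    (hDdense : ∀ a b : List Bool, ∃ a' b' : List Bool, (a', b') ∈ D ∧ a <+: a' ∧ b <+: b')
    (hDopen : ∀ p ∈ D, ∀ a' b' : List Bool, p.1 <+: a' → p.2 <+: b' → (a', b') ∈ D)
    (B : Set (List Bool)) (hB : B.Finite) :
    ∀ (a₀ : List Bool) (G : List Bool → List Bool),
      ∃ (a' : List Bool) (G' : List Bool → List Bool), a₀ <+: a' ∧ (∀ b, G b <+: G' b) ∧
        (∀ b ∈ B, (a', G' b) ∈ D) := by
  refine Set.Finite.induction_on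
    (motive := fun B _ => ∀ (a₀ : List Bool) (G : List Bool → List Bool),
      ∃ (a' : List Bool) (G' : List Bool → List Bool), a₀ <+: a' ∧ (∀ b, G b <+: G' b) ∧
        (∀ b ∈ B, (a', G' b) ∈ D)) B hB
    (fun a₀ G => ⟨a₀, G, List.prefix_refl _, fun b => List.prefix_refl _, by simp⟩) ?_
  intro b B hb hBfin ih a₀ G
  obtain ⟨a', G', h1, h2, h3⟩ := ih a₀ G
  obtain ⟨a'', b'', hD, ha, hbp⟩ := hDdense a' (G' b)
  refine ⟨a'', Function.update G' b b'', h1.trans ha, ?_, ?_⟩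
  · intro x
    by_cases hx : x = b
    · subst hx; rw [Function.update_self]; exact (h2 x).trans hbp
    · rw [Function.update_of_ne hx]; exact h2 x
  · intro x hx
    rcases Set.mem_insert_iff.1 hx with rfl | hxB
    · rw [Function.update_self]; exact hD
    · have hxb : x ≠ b := fun e => hb (e ▸ hxB)
      rw [Function.update_of_ne hxb]
      exact hDopen _ (h3 x hxB) _ _ ha (List.prefix_refl _)

lemma pairD (D : Set (List Bool × List Bool))
    (hDdense : ∀ a b : List Bool, ∃ a' b' : List Bool, (a', b') ∈ D ∧ a <+: a' ∧ b <+: b')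
    (hDopen : ∀ p ∈ D, ∀ a' b' : List Bool, p.1 <+: a' → p.2 <+: b' → (a', b') ∈ D)
    (A B : Set (List Bool)) (hA : A.Finite) (hB : B.Finite) :
    ∃ F G : List Bool → List Bool, (∀ a, a <+: F a) ∧ (∀ b, b <+: G b) ∧
      ∀ a ∈ A, ∀ b ∈ B, (F a, G b) ∈ D := by
  refine Set.Finite.induction_on
    (motive := fun A _ => ∃ F G : List Bool → List Bool, (∀ a, a <+: F a) ∧ (∀ b, b <+: G b) ∧
      ∀ a ∈ A, ∀ b ∈ B, (F a, G b) ∈ D) A hA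
    ⟨id, id, fun a => List.prefix_refl _, fun b => List.prefix_refl _, by simp⟩ ?_
  intro a A ha hAfin ih
  obtain ⟨F, G, hF, hG, hFG⟩ := ih
  obtain ⟨a', G', h1, h2, h3⟩ := oneD D hDdense hDopen B hB a G
  refine ⟨Function.update F a a', G', ?_, fun b => (hG b).trans (h2 b), ?_⟩
  · intro x
    by_cases hx : x = a
    · subst hx; rw [Function.update_self]; exact h1
    · rw [Function.update_of_ne hx]; exact hF x
  · intro x hx b hb
    rcases Set.mem_insert_iff.1 hx with rfl | hxA
    · rw [Function.update_self]; exact h3 b hb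
    · have hxa : x ≠ a := fun e => ha (e ▸ hxA)
      rw [Function.update_of_ne hxa]
      exact hDopen _ (hFG x hxA b hb) _ _ (List.prefix_refl _) (h2 b)

lemma phi_len (φ : List Bool → List Bool) (hmono : ∀ c c', c <+: c' → φ c <+: φ c')
    (hinj : Function.Injective φ) :
    ∀ (j : ℕ) (c c' : List Bool), c <+: c' → c'.length = c.length + j →
      (φ c).length + j ≤ (φ c').length := by
  intro j
  induction j with
  | zero =>
    intro c c' h hl
    have : c = c' := h.eq_of_length (by omega)
    subst this; simp
  | succ j ih =>
    intro c c' h hl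
    have h1 : c <+: c'.dropLast := prefix_dropLast' h (by omega)
    have h2 := ih c c'.dropLast h1 (by rw [List.length_dropLast]; omega)
    have h3 : φ c'.dropLast <+: φ c' := hmono _ _ (List.dropLast_prefix _)
    have h4 : φ c'.dropLast ≠ φ c' := by
      intro e
      have := congrArg List.length (hinj e)
      rw [List.length_dropLast] at this
      omega
    have h5 : (φ c'.dropLast).length < (φ c').length :=
      lt_of_le_of_ne h3.length_le fun e => h4 (h3.eq_of_length e)
    omega

noncomputable def esmF {t : Set (List Bool)} {n : ℕ} (e : ↥t ≃ ↥(FullBin n)) :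
    List Bool → List Bool :=
  fun m => if h : m.length ≤ n then (e.symm ⟨m, h⟩ : List Bool) else []

lemma esmF_mem {t : Set (List Bool)} {n : ℕ} (e : ↥t ≃ ↥(FullBin n)) {m : List Bool}
    (h : m.length ≤ n) : esmF e m ∈ t := by
  rw [esmF, dif_pos h]; exact (e.symm ⟨m, h⟩).2

lemma esmF_ord {t : Set (List Bool)} {n : ℕ} (e : ↥t ≃ ↥(FullBin n))
    (hte : ∀ a b : t, (a : List Bool) <+: (b : List Bool) ↔
      ((e a : List Bool) <+: (e b : List Bool)))
    {m m' : List Bool} (h : m.length ≤ n) (h' : m'.length ≤ n) :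
    esmF e m <+: esmF e m' ↔ m <+: m' := by
  simp only [esmF]
  rw [dif_pos h, dif_pos h']
  have := hte (e.symm ⟨m, h⟩) (e.symm ⟨m', h'⟩)
  simpa using this

lemma esmF_surj {t : Set (List Bool)} {n : ℕ} (e : ↥t ≃ ↥(FullBin n)) {p : List Bool}
    (hp : p ∈ t) : ∃ m : List Bool, m.length ≤ n ∧ esmF e m = p := by
  refine ⟨(e ⟨p, hp⟩ : List Bool), (e ⟨p, hp⟩).2, ?_⟩
  rw [esmF, dif_pos (show ((e ⟨p, hp⟩ : List Bool)).length ≤ n from (e ⟨p, hp⟩).2)]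
  simp

/-- The one-sided extension lemma: given an auxiliary condition `t` over `T`,
there is a finite set `A` of "codes" such that for every extension operator `F`,
we can extend `t` to `t'` whose terminal nodes have `Θ`-images of the form `F a`, `a ∈ A`. -/
lemma side_lemma (T : Set (List Bool)) (hT : PerfectTree T)
    (Θ : List Bool → List Bool)
    (hbij : Set.BijOn Θ (splitNodes T) Set.univ)
    (hord : ∀ a ∈ splitNodes T, ∀ b ∈ splitNodes T, (a <+: b ↔ Θ a <+: Θ b))
    (t : Set (List Bool)) (ht : t ∈ SacksAux T) :
    ∃ A : Set (List Bool), A.Finite ∧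
      ∀ F : List Bool → List Bool, (∀ a, a <+: F a) →
        ∃ t' ∈ SacksAux T, EndExt t' t ∧ ∀ p ∈ Term t', ∃ a ∈ A, Θ p = F a := by
  obtain ⟨htT, htfin, n, e, hte⟩ := ht
  -- the inverse φ of Θ on split nodes
  have hsurj : ∀ c : List Bool, ∃ u, u ∈ splitNodes T ∧ Θ u = c := fun c => by
    obtain ⟨u, hu, h⟩ := hbij.surjOn (Set.mem_univ c)
    exact ⟨u, hu, h⟩
  choose φ hφs hφΘ using hsurj
  have hφmono : ∀ c c', c <+: c' → φ c <+: φ c' := fun c c' h => by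
    rw [hord _ (hφs c) _ (hφs c'), hφΘ, hφΘ]; exact h
  have hφinj : Function.Injective φ := fun c c' h => by rw [← hφΘ c, ← hφΘ c', h]
  have hφeq : ∀ u ∈ splitNodes T, φ (Θ u) = u := fun u hu =>
    hbij.injOn (hφs _) hu (hφΘ _)
  -- choosing split nodes above arbitrary nodes
  have hup' : ∀ l : List Bool, ∃ u, l ∈ T → (l <+: u ∧ u ∈ splitNodes T) := fun l => by
    by_cases h : l ∈ T
    · obtain ⟨m, hm, hlm, hsp⟩ := hT.2.2 l h
      exact ⟨m, fun _ => ⟨hlm, hm, hsp⟩⟩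
    · exact ⟨[], fun h' => absurd h' h⟩
  choose up hup using hup'
  set H := height t with hHdef
  have hH : ∀ l ∈ t, l.length ≤ H :=
    fun l hl => le_csSup (htfin.image List.length).bddAbove ⟨l, hl, rfl⟩
  -- base nodes and codes for new leaves
  set nd : List Bool → List Bool :=
    fun m => up (up (esmF e m.dropLast) ++ [m.getLastD false]) with hnd
  set c₀ : List Bool → List Bool :=
    fun m => Θ (nd m) ++ List.replicate (H + 1) false with hc₀
  refine ⟨c₀ '' {m | m.length = n + 1}, (List.finite_length_eq Bool (n + 1)).image _, ?_⟩
  intro F hF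
  set g : List Bool → List Bool := fun m => φ (F (c₀ m)) with hg
  -- basic facts about leaves
  have hfacts : ∀ m : List Bool, m.length = n + 1 →
      esmF e m.dropLast ∈ t ∧
      up (esmF e m.dropLast) ++ [m.getLastD false] ∈ T ∧
      esmF e m.dropLast <+: up (esmF e m.dropLast) ++ [m.getLastD false] := by
    intro m hm
    have hd : (m.dropLast).length = n := by rw [List.length_dropLast]; omega
    have h1 : esmF e m.dropLast ∈ t := esmF_mem e (le_of_eq hd)
    have h2 := hup (esmF e m.dropLast) (htT h1)
    refine ⟨h1, ?_, h2.1.trans (List.prefix_append _ _)⟩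
    rcases Bool.eq_false_or_eq_true (m.getLastD false) with hb | hb <;> rw [hb]
    · exact h2.2.2.2
    · exact h2.2.2.1
  -- key facts about the new leaf nodes
  have hkey : ∀ m : List Bool, m.length = n + 1 →
      g m ∈ splitNodes T ∧ Θ (g m) = F (c₀ m) ∧
      up (esmF e m.dropLast) ++ [m.getLastD false] <+: g m ∧
      esmF e m.dropLast <+: g m ∧ H < (g m).length := by
    intro m hm
    obtain ⟨h1, h3, hpre⟩ := hfacts m hm
    have h4 := hup _ h3
    have hnds : nd m ∈ splitNodes T := h4.2
    have hΘpre : Θ (nd m) <+: c₀ m := List.prefix_append _ _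
    have hcF : c₀ m <+: F (c₀ m) := hF _
    have hgm : nd m <+: g m := by
      have := hφmono (Θ (nd m)) (F (c₀ m)) (hΘpre.trans hcF)
      rwa [hφeq _ hnds] at this
    have hlen : H < (φ (F (c₀ m))).length := by
      have hpl : Θ (nd m) <+: F (c₀ m) := hΘpre.trans hcF
      have hle := hpl.length_le
      have hlc : (c₀ m).length = (Θ (nd m)).length + (H + 1) := by
        simp only [hc₀, List.length_append, List.length_replicate]
      have hle2 : (c₀ m).length ≤ (F (c₀ m)).length := hcF.length_le
      have h5 := phi_len φ hφmono hφinj ((F (c₀ m)).length - (Θ (nd m)).length)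
        (Θ (nd m)) (F (c₀ m)) hpl (by omega)
      rw [hφeq _ hnds] at h5
      omega
    exact ⟨hφs _, hφΘ _, h4.1.trans hgm, hpre.trans (h4.1.trans hgm), hlen⟩
  -- incomparability of distinct new leaves
  have hinc : ∀ m m' : List Bool, m.length = n + 1 → m'.length = n + 1 → m ≠ m' →
      ¬ g m <+: g m' := by
    intro m m' hm hm' hne
    have hmne : m ≠ [] := by intro h; rw [h] at hm; simp at hm
    have hmne' : m' ≠ [] := by intro h; rw [h] at hm'; simp at hm'
    by_cases hd : m.dropLast = m'.dropLast
    · have hb : m.getLastD false ≠ m'.getLastD false := by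
        intro hb
        apply hne
        rw [← concat_getLastD m hmne, ← concat_getLastD m' hmne', hd, hb]
      have h1 : ¬ up (esmF e m.dropLast) ++ [m.getLastD false] <+:
          up (esmF e m'.dropLast) ++ [m'.getLastD false] := by
        rw [← hd]
        intro h
        have h9 := List.append_cancel_left (h.eq_of_length (by simp))
        simp only [List.cons.injEq, and_true] at h9
        exact hb h9
      have h2 : ¬ up (esmF e m'.dropLast) ++ [m'.getLastD false] <+:
          up (esmF e m.dropLast) ++ [m.getLastD false] := by
        rw [← hd]
        intro h
        have h9 := List.append_cancel_left (h.eq_of_length (by simp))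
        simp only [List.cons.injEq, and_true] at h9
        exact hb h9.symm
      exact not_prefix_extend h1 h2 (hkey m hm).2.2.1 (hkey m' hm').2.2.1
    · have hdl : (m.dropLast).length = n := by rw [List.length_dropLast]; omega
      have hdl' : (m'.dropLast).length = n := by rw [List.length_dropLast]; omega
      have h1 : ¬ esmF e m.dropLast <+: esmF e m'.dropLast := by
        rw [esmF_ord e hte (le_of_eq hdl) (le_of_eq hdl')]
        intro h
        exact hd (h.eq_of_length (by omega))
      have h2 : ¬ esmF e m'.dropLast <+: esmF e m.dropLast := by
        rw [esmF_ord e hte (le_of_eq hdl') (le_of_eq hdl)]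
        intro h
        exact hd (h.eq_of_length (by omega)).symm
      exact not_prefix_extend h1 h2 (hkey m hm).2.2.2.1 (hkey m' hm').2.2.2.1
  -- the extended condition
  set t' : Set (List Bool) := t ∪ g '' {m | m.length = n + 1} with ht'
  have hsub : t' ⊆ T := by
    rintro z (hz | ⟨m, hm, rfl⟩)
    · exact htT hz
    · exact (hkey m hm).1.1
  have hfin : t'.Finite := htfin.union ((List.finite_length_eq Bool (n + 1)).image g)
  -- the order-preserving enumeration
  set Ff0 : List Bool → List Bool := fun x => if x.length ≤ n then esmF e x else g x
    with hFf0
  have hFf0low : ∀ x : List Bool, x.length ≤ n → Ff0 x = esmF e x := fun x hx => if_pos hx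
  have hFf0hi : ∀ x : List Bool, x.length = n + 1 → Ff0 x = g x := fun x hx =>
    if_neg (by omega)
  have hmix : ∀ x : List Bool, x.length ≤ n → ∀ y : List Bool, y.length = n + 1 →
      (esmF e x <+: g y ↔ x <+: y) := by
    intro x hx y hy
    have hyd : (y.dropLast).length = n := by rw [List.length_dropLast]; omega
    have h2 : esmF e y.dropLast <+: g y := (hkey y hy).2.2.2.1
    constructor
    · intro h
      rcases List.prefix_or_prefix_of_prefix h h2 with h' | h'
      · exact ((esmF_ord e hte hx (le_of_eq hyd)).1 h').trans (List.dropLast_prefix _)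
      · have h'' := (esmF_ord e hte (le_of_eq hyd) hx).1 h'
        have hlen2 := h''.length_le
        have : y.dropLast = x := h''.eq_of_length (by omega)
        rw [← this]
        exact List.dropLast_prefix _
    · intro h
      have hxd : x <+: y.dropLast := prefix_dropLast' h (by omega)
      exact ((esmF_ord e hte hx (le_of_eq hyd)).2 hxd).trans h2
  have hFord : ∀ x : List Bool, x.length ≤ n + 1 → ∀ y : List Bool, y.length ≤ n + 1 →
      (Ff0 x <+: Ff0 y ↔ x <+: y) := by
    intro x hx y hy
    by_cases hx' : x.length ≤ n
    · by_cases hy' : y.length ≤ n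
      · rw [hFf0low x hx', hFf0low y hy']
        exact esmF_ord e hte hx' hy'
      · rw [hFf0low x hx', hFf0hi y (by omega)]
        exact hmix x hx' y (by omega)
    · by_cases hy' : y.length ≤ n
      · rw [hFf0hi x (by omega), hFf0low y hy']
        refine iff_of_false ?_ ?_
        · intro h
          have h1 := h.length_le
          have h2 := hH _ (esmF_mem e hy')
          have h3 := (hkey x (by omega)).2.2.2.2
          omega
        · intro h
          have := h.length_le
          omega
      · rw [hFf0hi x (by omega), hFf0hi y (by omega)]
        constructor
        · intro h
          by_cases hxy : x = y
          · subst hxy; exact List.prefix_refl _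
          · exact absurd h (hinc x y (by omega) (by omega) hxy)
        · intro h
          have : x = y := h.eq_of_length (by omega)
          subst this; exact List.prefix_refl _
  have hmemFf : ∀ x : List Bool, x.length ≤ n + 1 → Ff0 x ∈ t' := by
    intro x hx
    by_cases hx' : x.length ≤ n
    · rw [hFf0low x hx']
      exact Or.inl (esmF_mem e hx')
    · rw [hFf0hi x (by omega)]
      exact Or.inr ⟨x, show x.length = n + 1 by omega, rfl⟩
  set F2 : ↥(FullBin (n + 1)) → ↥t' := fun x => ⟨Ff0 x, hmemFf x x.2⟩ with hF2
  have hF2bij : Function.Bijective F2 := by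
    constructor
    · intro x y hxy
      have h1 : Ff0 ↑x = Ff0 ↑y := congrArg Subtype.val hxy
      have h2 := (hFord _ x.2 _ y.2).1 (h1 ▸ List.prefix_refl _)
      have h3 := (hFord _ y.2 _ x.2).1 (h1 ▸ List.prefix_refl _)
      exact Subtype.ext (h2.eq_of_length (le_antisymm h2.length_le h3.length_le))
    · rintro ⟨z, hz | ⟨m, hm, rfl⟩⟩
      · obtain ⟨x, hx, hxz⟩ := esmF_surj e hz
        exact ⟨⟨x, by exact le_trans hx (by omega)⟩,
          Subtype.ext (by show Ff0 x = z; rw [hFf0low x hx]; exact hxz)⟩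
      · exact ⟨⟨m, le_of_eq hm⟩, Subtype.ext (hFf0hi m hm)⟩
  have hiso : IsoTo t' (FullBin (n + 1)) := by
    refine ⟨(Equiv.ofBijective F2 hF2bij).symm, ?_⟩
    intro a b
    have ha2 : F2 ((Equiv.ofBijective F2 hF2bij).symm a) = a :=
      (Equiv.ofBijective F2 hF2bij).apply_symm_apply a
    have hb2 : F2 ((Equiv.ofBijective F2 hF2bij).symm b) = b :=
      (Equiv.ofBijective F2 hF2bij).apply_symm_apply b
    rw [← congrArg Subtype.val ha2, ← congrArg Subtype.val hb2]
    exact hFord _ ((Equiv.ofBijective F2 hF2bij).symm a).2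
      _ ((Equiv.ofBijective F2 hF2bij).symm b).2
  refine ⟨t', ⟨hsub, hfin, n + 1, hiso⟩, ⟨Set.subset_union_left, ?_⟩, ?_⟩
  · rintro l (hl | ⟨m, hm, rfl⟩) hlen
    · exact hl
    · exact absurd hlen (by have := (hkey m hm).2.2.2.2; omega)
  · rintro p ⟨hp1, hp2⟩
    rcases hp1 with hp1 | ⟨m, hm, rfl⟩
    · exfalso
      obtain ⟨x, hx, hxp⟩ := esmF_surj e hp1
      set m := x ++ List.replicate (n + 1 - x.length) false with hmdef
      have hml : m.length = n + 1 := by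
        rw [hmdef]; simp only [List.length_append, List.length_replicate]; omega
      have hdl : (m.dropLast).length = n := by rw [List.length_dropLast]; omega
      have hxm : x <+: m.dropLast := by
        refine prefix_dropLast' (List.prefix_append _ _) ?_
        omega
      have h1 : esmF e x <+: g m :=
        ((esmF_ord e hte hx (le_of_eq hdl)).2 hxm).trans (hkey m hml).2.2.2.1
      have h2 : g m = p := hp2 (g m) (Or.inr ⟨m, hml, rfl⟩) (hxp ▸ h1)
      have h3 := hH p hp1
      have h4 := (hkey m hml).2.2.2.2
      rw [h2] at h4
      omega
    · exact ⟨c₀ m, ⟨m, hm, rfl⟩, (hkey m hm).2.1⟩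

/-- Let `T`, `S` be perfect trees with canonical splitting-node isomorphisms
`Θ_T`, `Θ_S` onto `2^{<ω}`, and let `D` be open dense in the product of two
copies of Cohen forcing. Then the set `D_{(T,S)}` of pairs `(t, s)` of auxiliary
conditions all of whose pairs of terminal nodes land (via `(Θ_T, Θ_S)`) in `D`
is dense in `𝔸_{𝕊,T} × 𝔸_{𝕊,S}` (with the componentwise order). -/
theorem sacksAux_product_dense (T S : Set (List Bool))
    (hT : PerfectTree T) (hS : PerfectTree S)
    (ΘT ΘS : List Bool → List Bool)
    (hTbij : Set.BijOn ΘT (splitNodes T) Set.univ)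
    (hTord : ∀ a ∈ splitNodes T, ∀ b ∈ splitNodes T, (a <+: b ↔ ΘT a <+: ΘT b))
    (hSbij : Set.BijOn ΘS (splitNodes S) Set.univ)
    (hSord : ∀ a ∈ splitNodes S, ∀ b ∈ splitNodes S, (a <+: b ↔ ΘS a <+: ΘS b))
    (D : Set (List Bool × List Bool))
    (hDdense : ∀ a b : List Bool, ∃ a' b' : List Bool, (a', b') ∈ D ∧ a <+: a' ∧ b <+: b')
    (hDopen : ∀ p ∈ D, ∀ a' b' : List Bool, p.1 <+: a' → p.2 <+: b' → (a', b') ∈ D) :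
    ∀ t ∈ SacksAux T, ∀ s ∈ SacksAux S,
      ∃ t' ∈ SacksAux T, ∃ s' ∈ SacksAux S, EndExt t' t ∧ EndExt s' s ∧
        ∀ p ∈ Term t', ∀ q ∈ Term s', (ΘT p, ΘS q) ∈ D := by
  intro t ht s hs
  obtain ⟨A, hAfin, hAcont⟩ := side_lemma T hT ΘT hTbij hTord t ht
  obtain ⟨B, hBfin, hBcont⟩ := side_lemma S hS ΘS hSbij hSord s hs
  obtain ⟨F, G, hF, hG, hFG⟩ := pairD D hDdense hDopen A B hAfin hBfin
  obtain ⟨t', ht', hEt, htermt⟩ := hAcont F hF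
  obtain ⟨s', hs', hEs, hterms⟩ := hBcont G hG
  refine ⟨t', ht', s', hs', hEt, hEs, fun p hp q hq => ?_⟩
  obtain ⟨a, ha, hpa⟩ := htermt p hp
  obtain ⟨b, hb, hqb⟩ := hterms q hq
  rw [hpa, hqb]
  exact hFG a ha b hb
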